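/- Let p be a prime, F a field of characteristic p, r ≥ 1, and let e₁ ≥ e₂ ≥ ⋯ ≥ e_r ≥ 1 be integers. Let D be the finite abelian p-group (ZMod p^{e₁}) × (ZMod p^{e₂}) × ⋯ × (ZMod p^{e_r}). Then the Loewy length of the group algebra F[D] equals p^{e₁} + p^{e₂} + ⋯ + p^{e_r} − r + 1. -/

import Mathlib

/-- The Loewy length of a ring: the smallest positive `L` such that the `L`-th power of the
Jacobson radical is zero. -/
noncomputable def loewyLength (A : Type*) [Ring A] : ℕ :=
  sInf {L : ℕ | 0 < L ∧ ((⊥ : Ideal A).jacobson) ^ L = ⊥}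

open MonoidAlgebra

variable {r : ℕ}

/-- Generator of the `i`-th factor. -/
def genG (q : Fin r → ℕ) (i : Fin r) : ∀ j, Multiplicative (ZMod (q j)) :=
  Pi.mulSingle i (Multiplicative.ofAdd 1)

/-- `g i - 1` in the group algebra. -/
noncomputable def genX (q : Fin r → ℕ) (F : Type*) [Field F] (i : Fin r) :
    MonoidAlgebra F (∀ j, Multiplicative (ZMod (q j))) :=
  MonoidAlgebra.of F _ (genG q i) - 1

theorem genG_pow_self (q : Fin r → ℕ) (i : Fin r) : genG q i ^ q i = 1 := by
  unfold genG
  rw [← Pi.mulSingle_pow]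
  convert Pi.mulSingle_one i
  rw [← ofAdd_nsmul]
  simp [nsmul_eq_mul, ZMod.natCast_self]

theorem genG_pow_val (q : Fin r → ℕ) [∀ j, NeZero (q j)] (i : Fin r)
    (a : Multiplicative (ZMod (q i))) :
    genG q i ^ (Multiplicative.toAdd a).val = Pi.mulSingle i a := by
  unfold genG
  rw [← Pi.mulSingle_pow, ← ofAdd_nsmul]
  rw [nsmul_eq_mul, mul_one, ZMod.natCast_val, ZMod.cast_id]
  simp

theorem genX_pow_self (q : Fin r → ℕ) (F : Type*) [Field F] (p : ℕ) [Fact p.Prime]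
    [CharP F p] (i : Fin r) (hqp : ∃ n, q i = p ^ n) : genX q F i ^ q i = 0 := by
  obtain ⟨n, hn⟩ := hqp
  haveI : CharP (MonoidAlgebra F (∀ j, Multiplicative (ZMod (q j)))) p :=
    charP_of_injective_algebraMap' F p
  unfold genX
  rw [hn, sub_pow_char_pow, one_pow, ← map_pow, ← hn, genG_pow_self, map_one, sub_self]

section
variable (q : Fin r → ℕ) (F : Type*) [Field F]

/-- The augmentation map. -/
noncomputable def aug : MonoidAlgebra F (∀ j, Multiplicative (ZMod (q j))) →ₐ[F] F :=
  MonoidAlgebra.lift F F _ 1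

@[simp] theorem aug_of (d : ∀ j, Multiplicative (ZMod (q j))) :
    aug q F (MonoidAlgebra.of F _ d) = 1 := by
  unfold aug; rw [MonoidAlgebra.lift_of]; rfl

theorem of_sub_one_mem [∀ j, NeZero (q j)] (d : ∀ j, Multiplicative (ZMod (q j))) :
    MonoidAlgebra.of F _ d - 1 ∈ Ideal.span (Set.range (genX q F)) := by
  classical
  set I := Ideal.span (Set.range (genX q F)) with hI
  set S : Subgroup (∀ j, Multiplicative (ZMod (q j))) :=
    { carrier := {d | MonoidAlgebra.of F _ d - 1 ∈ I}
      one_mem' := by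
        simp only [Set.mem_setOf_eq, map_one, sub_self]
        exact I.zero_mem
      mul_mem' := by
        intro a b ha hb
        simp only [Set.mem_setOf_eq, map_mul] at *
        have : MonoidAlgebra.of F _ a * MonoidAlgebra.of F _ b - 1 =
            MonoidAlgebra.of F _ a * (MonoidAlgebra.of F _ b - 1) +
            (MonoidAlgebra.of F _ a - 1) := by ring
        rw [this]
        exact I.add_mem (I.mul_mem_left _ hb) ha
      inv_mem' := by
        intro a ha
        simp only [Set.mem_setOf_eq] at *
        have h2 : MonoidAlgebra.of F (∀ j, Multiplicative (ZMod (q j))) a⁻¹ *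
            MonoidAlgebra.of F _ a = 1 := by
          rw [← map_mul, inv_mul_cancel, map_one]
        have : MonoidAlgebra.of F (∀ j, Multiplicative (ZMod (q j))) a⁻¹ - 1 =
            -(MonoidAlgebra.of F _ a⁻¹ * (MonoidAlgebra.of F _ a - 1)) := by
          rw [mul_sub, h2]
          ring
        rw [this]
        exact I.neg_mem (I.mul_mem_left _ ha) } with hS
  have hgen : ∀ i, genG q i ∈ S := by
    intro i
    show MonoidAlgebra.of F _ (genG q i) - 1 ∈ I
    exact Ideal.subset_span ⟨i, rfl⟩
  have : d ∈ S := by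
    have hd : d = ∏ i, Pi.mulSingle i (d i) := by
      funext j
      rw [Finset.prod_apply]
      exact (Fintype.prod_pi_mulSingle j d).symm
    rw [hd]
    exact Subgroup.prod_mem S fun i _ => by
      rw [← genG_pow_val q i (d i)]
      exact Subgroup.pow_mem S (hgen i) _
  exact this

theorem span_genX_eq_ker [∀ j, NeZero (q j)] :
    Ideal.span (Set.range (genX q F)) = RingHom.ker (aug q F) := by
  apply le_antisymm
  · rw [Ideal.span_le]
    rintro _ ⟨i, rfl⟩
    simp only [SetLike.mem_coe, RingHom.mem_ker, genX, map_sub, map_one, aug_of, sub_self]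
  · intro a ha
    have key : ∀ b : MonoidAlgebra F (∀ j, Multiplicative (ZMod (q j))),
        b - algebraMap F _ (aug q F b) ∈ Ideal.span (Set.range (genX q F)) := by
      intro b
      induction b using MonoidAlgebra.induction_on with
      | of d =>
        rw [aug_of, map_one]
        exact of_sub_one_mem q F d
      | add f g hf hg =>
        have : f + g - algebraMap F _ (aug q F (f + g)) =
            (f - algebraMap F _ (aug q F f)) + (g - algebraMap F _ (aug q F g)) := by
          rw [map_add, map_add]; ring
        rw [this]
        exact Ideal.add_mem _ hf hg
      | smul c f hf =>
        have : c • f - algebraMap F _ (aug q F (c • f)) =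
            algebraMap F _ c * (f - algebraMap F _ (aug q F f)) := by
          rw [map_smul, Algebra.smul_def, Algebra.smul_def, map_mul, mul_sub]
          simp
        rw [this]
        exact Ideal.mul_mem_left _ _ hf
    have := key a
    rw [RingHom.mem_ker] at ha
    rwa [ha, map_zero, sub_zero] at this

theorem span_genX_isMaximal [∀ j, NeZero (q j)] :
    (Ideal.span (Set.range (genX q F))).IsMaximal := by
  rw [span_genX_eq_ker]
  exact RingHom.ker_isMaximal_of_surjective (aug q F) fun c =>
    ⟨algebraMap F _ c, (aug q F).commutes c⟩

theorem monomial_vanish (p : ℕ) [Fact p.Prime] [CharP F p] (hqp : ∀ i, ∃ n, q i = p ^ n)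
    (c : Fin r → ℕ) (hc : (∑ i, (q i - 1)) < ∑ i, c i) :
    ∏ i, genX q F i ^ c i = 0 := by
  have hex : ∃ i, q i ≤ c i := by
    by_contra h
    push_neg at h
    have hle : ∀ i ∈ Finset.univ, c i ≤ q i - 1 := fun i _ => by have := h i; omega
    have := Finset.sum_le_sum hle
    omega
  obtain ⟨i, hi⟩ := hex
  apply Finset.prod_eq_zero (Finset.mem_univ i)
  have : genX q F i ^ c i = genX q F i ^ (c i - q i) * genX q F i ^ q i := by
    rw [← pow_add, Nat.sub_add_cancel hi]
  rw [this, genX_pow_self q F p i (hqp i), mul_zero]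

theorem span_genX_pow_le (n : ℕ) :
    Ideal.span (Set.range (genX q F)) ^ n ≤
      Ideal.span {a | ∃ c : Fin r → ℕ, (∑ i, c i) = n ∧ a = ∏ i, genX q F i ^ c i} := by
  classical
  induction n with
  | zero =>
    rw [pow_zero, Ideal.one_eq_top]
    rw [top_le_iff, Ideal.eq_top_iff_one]
    exact Ideal.subset_span ⟨0, by simp, by simp⟩
  | succ n ih =>
    rw [pow_succ]
    refine le_trans (Ideal.mul_mono ih le_rfl) ?_
    rw [Ideal.span_mul_span]
    rw [Ideal.span_le]
    intro z hz
    rw [Set.mem_mul] at hz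
    obtain ⟨s, ⟨c, hcsum, rfl⟩, t, ⟨i, rfl⟩, rfl⟩ := hz
    refine Ideal.subset_span ⟨fun j => c j + (if j = i then 1 else 0), ?_, ?_⟩
    · rw [Finset.sum_add_distrib, hcsum, Finset.sum_ite_eq' Finset.univ i fun _ => 1]
      simp
    · have : ∀ j, genX q F j ^ (c j + (if j = i then 1 else 0)) =
          genX q F j ^ c j * (if j = i then genX q F j else 1) := by
        intro j
        rw [pow_add]
        by_cases hji : j = i <;> simp [hji]
      rw [Finset.prod_congr rfl fun j _ => this j, Finset.prod_mul_distrib,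
        Finset.prod_ite_eq' Finset.univ i fun j => genX q F j]
      simp

theorem span_genX_pow_eq_bot (p : ℕ) [Fact p.Prime] [CharP F p]
    (hqp : ∀ i, ∃ n, q i = p ^ n) :
    Ideal.span (Set.range (genX q F)) ^ ((∑ i, (q i - 1)) + 1) = ⊥ := by
  rw [← le_bot_iff]
  refine le_trans (span_genX_pow_le q F _) ?_
  rw [Ideal.span_le]
  rintro _ ⟨c, hcsum, rfl⟩
  have : ∏ i, genX q F i ^ c i = 0 :=
    monomial_vanish q F p hqp c (by omega)
  simp [this]

set_option synthInstance.maxHeartbeats 1000000 in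
set_option maxHeartbeats 1000000 in
theorem prod_genX_pow_ne_zero (p : ℕ) [Fact p.Prime] [CharP F p]
    (hq2 : ∀ i, 2 ≤ q i) (hqp : ∀ i, ∃ n, q i = p ^ n) :
    ∏ i, genX q F i ^ (q i - 1) ≠ 0 := by
  classical
  haveI : ∀ j, NeZero (q j) := fun j => ⟨by have := hq2 j; omega⟩
  set J : Ideal (MvPolynomial (Fin r) F) :=
    Ideal.span (Set.range fun i => (MvPolynomial.X i : MvPolynomial (Fin r) F) ^ q i) with hJ
  set y : Fin r → MvPolynomial (Fin r) F ⧸ J :=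
    fun i => Ideal.Quotient.mk J (MvPolynomial.X i) with hy
  have hyq : ∀ i, (1 + y i) ^ q i = 1 := by
    intro i
    obtain ⟨n, hn⟩ := hqp i
    have h1 : ((1 + MvPolynomial.X i : MvPolynomial (Fin r) F)) ^ q i
        = 1 + (MvPolynomial.X i) ^ q i := by
      rw [hn, add_pow_char_pow, one_pow]
    calc (1 + y i) ^ q i
        = Ideal.Quotient.mk J ((1 + MvPolynomial.X i) ^ q i) := by
          rw [map_pow, map_add, map_one]
      _ = Ideal.Quotient.mk J (1 + (MvPolynomial.X i) ^ q i) := by rw [h1]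
      _ = 1 := by
          have hxmem : (MvPolynomial.X i : MvPolynomial (Fin r) F) ^ q i ∈ J := by
            rw [hJ]
            exact Ideal.subset_span ⟨i, rfl⟩
          rw [map_add, map_one, Ideal.Quotient.eq_zero_iff_mem.mpr hxmem, add_zero]
  set h : (∀ j, Multiplicative (ZMod (q j))) →* MvPolynomial (Fin r) F ⧸ J :=
    { toFun := fun d => ∏ i, (1 + y i) ^ (Multiplicative.toAdd (d i)).val
      map_one' := by simp
      map_mul' := by
        intro a b
        rw [← Finset.prod_mul_distrib]
        refine Finset.prod_congr rfl fun i _ => ?_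
        rw [← pow_add, Pi.mul_apply, toAdd_mul, ZMod.val_add,
          ← pow_eq_pow_mod _ (hyq i)] } with hh
  set φ := MonoidAlgebra.lift F (MvPolynomial (Fin r) F ⧸ J) (∀ j, Multiplicative (ZMod (q j))) h
    with hφ
  have hφx : ∀ i, φ (genX q F i) = y i := by
    intro i
    unfold genX
    rw [map_sub, map_one, MonoidAlgebra.lift_of]
    have : h (genG q i) = (1 + y i) ^ (1 : ℕ) := by
      show (∏ j, (1 + y j) ^ (Multiplicative.toAdd (genG q i j)).val) = _
      refine Fintype.prod_eq_single i ?_ |>.trans ?_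
      · intro j hj
        unfold genG
        rw [Pi.mulSingle_eq_of_ne hj]
        simp
      · haveI : Fact (1 < q i) := ⟨hq2 i⟩
        unfold genG
        rw [Pi.mulSingle_eq_same]
        simp [ZMod.val_one]
    rw [this, pow_one, add_sub_cancel_left]
  have himg : φ (∏ i, genX q F i ^ (q i - 1)) =
      Ideal.Quotient.mk J (∏ i, (MvPolynomial.X i) ^ (q i - 1)) := by
    rw [map_prod, map_prod]
    refine Finset.prod_congr rfl fun i _ => ?_
    rw [map_pow, hφx i, map_pow]
  -- the monomial is not in the monomial ideal J
  have hmem : (∏ i, (MvPolynomial.X i : MvPolynomial (Fin r) F) ^ (q i - 1)) ∉ J := by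
    set c : Fin r →₀ ℕ := Finsupp.equivFunOnFinite.symm (fun i => q i - 1) with hc
    have hcapp : ∀ i, c i = q i - 1 := fun i => rfl
    have hprod : (∏ i, (MvPolynomial.X i : MvPolynomial (Fin r) F) ^ (q i - 1)) =
        MvPolynomial.monomial c (1 : F) := by
      calc (∏ i, (MvPolynomial.X i : MvPolynomial (Fin r) F) ^ (q i - 1))
          = ∏ i, (MvPolynomial.X i : MvPolynomial (Fin r) F) ^ c i :=
            Finset.prod_congr rfl fun i _ => by rw [hcapp]
        _ = ∏ i ∈ c.support, (MvPolynomial.X i : MvPolynomial (Fin r) F) ^ c i :=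
            (Finset.prod_subset (Finset.subset_univ c.support) fun i _ hi => by
              rw [Finsupp.notMem_support_iff.mp hi, pow_zero]).symm
        _ = MvPolynomial.monomial c (1 : F) := MvPolynomial.prod_X_pow_eq_monomial
    have hJeq : J = Ideal.span
        ((fun s => MvPolynomial.monomial s (1 : F)) ''
          Set.range (fun i => Finsupp.single i (q i))) := by
      have hcomp : ((fun s => MvPolynomial.monomial s (1 : F)) ∘
          fun i => Finsupp.single i (q i)) = fun i =>
            (MvPolynomial.X i : MvPolynomial (Fin r) F) ^ q i :=
        funext fun i => by simp [Function.comp, MvPolynomial.X_pow_eq_monomial]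
      rw [hJ, ← Set.range_comp, hcomp]
    rw [hprod, hJeq, MvPolynomial.mem_ideal_span_monomial_image]
    push_neg
    refine ⟨c, ?_, ?_⟩
    · rw [MvPolynomial.support_monomial]
      simp
    · rintro _ ⟨i, rfl⟩ hle
      have := (Finsupp.single_le_iff).mp hle
      rw [hcapp] at this
      have := hq2 i
      omega
  intro h0
  rw [h0, map_zero] at himg
  exact hmem (Ideal.Quotient.eq_zero_iff_mem.mp himg.symm)

theorem jacobson_bot_eq (p : ℕ) [Fact p.Prime] [CharP F p] [∀ j, NeZero (q j)]
    (hqp : ∀ i, ∃ n, q i = p ^ n) :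
    (⊥ : Ideal (MonoidAlgebra F (∀ j, Multiplicative (ZMod (q j))))).jacobson =
      Ideal.span (Set.range (genX q F)) := by
  apply le_antisymm
  · rw [Ideal.jacobson]
    exact sInf_le ⟨bot_le, span_genX_isMaximal q F⟩
  · refine le_trans ?_ Ideal.radical_le_jacobson
    intro a ha
    refine Ideal.mem_radical_iff.mpr ⟨(∑ i, (q i - 1)) + 1, ?_⟩
    have := Ideal.pow_mem_pow ha ((∑ i, (q i - 1)) + 1)
    rwa [span_genX_pow_eq_bot q F p hqp] at this

end

theorem key (p : ℕ) (hp : p.Prime) (F : Type*) [Field F] [CharP F p]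
    {r : ℕ} (q : Fin r → ℕ) (hq2 : ∀ i, 2 ≤ q i) (hqp : ∀ i, ∃ n, q i = p ^ n) :
    loewyLength (MonoidAlgebra F (∀ j : Fin r, Multiplicative (ZMod (q j)))) =
      (∑ i, (q i - 1)) + 1 := by
  haveI : Fact p.Prime := ⟨hp⟩
  haveI : ∀ j, NeZero (q j) := fun j => ⟨by have := hq2 j; omega⟩
  unfold loewyLength
  rw [jacobson_bot_eq q F p hqp]
  have hmem : (∑ i, (q i - 1)) + 1 ∈
      {L : ℕ | 0 < L ∧ Ideal.span (Set.range (genX q F)) ^ L = ⊥} :=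
    ⟨by omega, span_genX_pow_eq_bot q F p hqp⟩
  apply le_antisymm (Nat.sInf_le hmem)
  refine le_csInf ⟨_, hmem⟩ ?_
  intro L hL
  obtain ⟨hLpos, hLbot⟩ := hL
  by_contra hlt
  push_neg at hlt
  have hle : L ≤ ∑ i, (q i - 1) := by omega
  have hbot : Ideal.span (Set.range (genX q F)) ^ (∑ i, (q i - 1)) = ⊥ :=
    le_bot_iff.mp (le_trans (Ideal.pow_le_pow_right hle) (le_of_eq hLbot))
  apply prod_genX_pow_ne_zero q F p hq2 hqp
  have hmemN : ∏ i, genX q F i ^ (q i - 1) ∈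
      Ideal.span (Set.range (genX q F)) ^ (∑ i, (q i - 1)) := by
    rw [← Finset.prod_pow_eq_pow_sum]
    refine Ideal.prod_mem_prod fun i _ => Ideal.pow_mem_pow ?_ _
    exact Ideal.subset_span (Set.mem_range_self i)
  rw [hbot] at hmemN
  simpa using hmemN

theorem loewyLength_groupAlgebra_abelian (p : ℕ) (hp : p.Prime)
    (F : Type*) [Field F] [CharP F p] (r : ℕ) (hr : 0 < r)
    (e : Fin r → ℕ) (he : Antitone e) (h1 : ∀ i, 1 ≤ e i) :
    loewyLength (MonoidAlgebra F (∀ i : Fin r, Multiplicative (ZMod (p ^ e i)))) =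
      (∑ i, p ^ e i) - r + 1 := by
  have hq2 : ∀ i, 2 ≤ p ^ e i := fun i =>
    le_trans hp.two_le (Nat.le_self_pow (by have := h1 i; omega) p)
  have := key p hp F (fun i => p ^ e i) hq2 (fun i => ⟨e i, rfl⟩)
  rw [this]
  rw [Finset.sum_tsub_distrib Finset.univ (fun i _ => by have := hq2 i; omega)]
  simp
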